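/- Let q be a real number, and let n ≥ 1 and k ≥ 1 be integers. Then the k-th moment e_{n,k}(q) = ∑_{h=1}^n h^k q^{n-h} ∏_{j=1}^{h-1} (1 - q^{n-j}) satisfies e_{n,k}(q) = ∑_{ℓ=1}^k binom(k,ℓ) (-1)^{ℓ-1} n^{k-ℓ} a_{n,ℓ}(q), where a_{n,ℓ}(q) = ∑_{i=1}^n f_ℓ(i) ∏_{j=i}^{n-1} (1 - q^j) and f_ℓ(i) = ∑_{j=1}^ℓ binom(ℓ,j) (-1)^{j-1} i^{ℓ-j}. -/

import Mathlib

lemma keyGen (x y : ℝ) (k : ℕ) :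
    ∑ l ∈ Finset.Icc 1 k, (k.choose l : ℝ) * (-1) ^ (l - 1) * x ^ (k - l) * y ^ l
      = x ^ k - (x - y) ^ k := by
  have h : (x - y) ^ k = ∑ l ∈ Finset.range (k + 1), (-y) ^ l * x ^ (k - l) * (k.choose l : ℝ) := by
    rw [show x - y = -y + x by ring, add_pow]
  rw [Finset.sum_range_succ'] at h
  rw [← Finset.Ico_add_one_right_eq_Icc, Finset.sum_Ico_eq_sum_range]
  simp only [Nat.succ_sub_one, Nat.add_sub_cancel]
  rw [h]
  have e : ∀ i : ℕ, (k.choose (1 + i) : ℝ) * (-1) ^ (1 + i - 1) * x ^ (k - (1 + i)) * y ^ (1 + i)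
      = -((-y) ^ (i + 1) * x ^ (k - (i + 1)) * (k.choose (i + 1) : ℝ)) := by
    intro i
    rw [show 1 + i - 1 = i from by omega, show 1 + i = i + 1 from by omega, neg_pow]
    ring
  rw [Finset.sum_congr rfl (fun i _ => e i)]
  simp only [pow_zero, Nat.sub_zero, Nat.choose_zero_right, Nat.cast_one, one_mul, mul_one]
  rw [Finset.sum_neg_distrib]
  ring


/-- The `k`-th moment `e_{n,k}(q) = ∑_{h=1}^n h^k q^{n-h} ∏_{j=1}^{h-1} (1 - q^{n-j})`
of the Simon–Crippa–Collenberg random variable `γ_n^*(1)`. -/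
noncomputable def momentE (q : ℝ) (n k : ℕ) : ℝ :=
  ∑ h ∈ Finset.Icc 1 n, (h : ℝ) ^ k * q ^ (n - h) * ∏ j ∈ Finset.Icc 1 (h - 1), (1 - q ^ (n - j))

/-- For every real `q` and integers `n ≥ 1`, `k ≥ 1`,
`e_{n,k}(q) = ∑_{ℓ=1}^k binom(k,ℓ) (-1)^{ℓ-1} n^{k-ℓ} a_{n,ℓ}(q)`, where
`a_{n,ℓ}(q) = ∑_{i=1}^n f_ℓ(i) ∏_{j=i}^{n-1} (1 - q^j)` and
`f_ℓ(i) = ∑_{j=1}^ℓ binom(ℓ,j) (-1)^{j-1} i^{ℓ-j}`. -/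
theorem moment_eq_sum_a (q : ℝ) (n k : ℕ) (hn : 1 ≤ n) (hk : 1 ≤ k)
    (f : ℕ → ℕ → ℝ)
    (hf : ∀ l i : ℕ, f l i =
      ∑ j ∈ Finset.Icc 1 l, (l.choose j : ℝ) * (-1) ^ (j - 1) * (i : ℝ) ^ (l - j))
    (a : ℕ → ℕ → ℝ)
    (ha : ∀ m l : ℕ, a m l =
      ∑ i ∈ Finset.Icc 1 m, f l i * ∏ j ∈ Finset.Icc i (m - 1), (1 - q ^ j)) :
    momentE q n k =
      ∑ l ∈ Finset.Icc 1 k, (k.choose l : ℝ) * (-1) ^ (l - 1) * (n : ℝ) ^ (k - l) * a n l := by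
  set S : ℕ → ℝ := fun h => ∏ j ∈ Finset.Icc 1 (h - 1), (1 - q ^ (n - j)) with hS
  -- f in closed form
  have hf' : ∀ l i : ℕ, f l i = (i : ℝ) ^ l - ((i : ℝ) - 1) ^ l := by
    intro l i
    rw [hf]
    have := keyGen (i : ℝ) 1 l
    simp only [one_pow, mul_one] at this
    rw [← this]
  -- Step 1: RHS
  have hRHS : (∑ l ∈ Finset.Icc 1 k, (k.choose l : ℝ) * (-1) ^ (l - 1) * (n : ℝ) ^ (k - l) * a n l)
      = ∑ i ∈ Finset.Icc 1 n, (((n : ℝ) - (i : ℝ) + 1) ^ k - ((n : ℝ) - (i : ℝ)) ^ k) *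
          ∏ j ∈ Finset.Icc i (n - 1), (1 - q ^ j) := by
    simp only [ha, hf', Finset.mul_sum]
    rw [Finset.sum_comm]
    refine Finset.sum_congr rfl fun i _ => ?_
    have e : ∀ l ∈ Finset.Icc 1 k,
        (k.choose l : ℝ) * (-1) ^ (l - 1) * (n : ℝ) ^ (k - l) *
          (((i : ℝ) ^ l - ((i : ℝ) - 1) ^ l) * ∏ j ∈ Finset.Icc i (n - 1), (1 - q ^ j))
        = ((k.choose l : ℝ) * (-1) ^ (l - 1) * (n : ℝ) ^ (k - l) * (i : ℝ) ^ l -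
            (k.choose l : ℝ) * (-1) ^ (l - 1) * (n : ℝ) ^ (k - l) * ((i : ℝ) - 1) ^ l) *
            ∏ j ∈ Finset.Icc i (n - 1), (1 - q ^ j) := fun l _ => by ring
    rw [Finset.sum_congr rfl e, ← Finset.sum_mul]
    congr 1
    rw [Finset.sum_sub_distrib, keyGen (n : ℝ) (i : ℝ) k, keyGen (n : ℝ) ((i : ℝ) - 1) k]
    ring
  -- telescoping on the left
  have hstep : ∀ h : ℕ, 1 ≤ h → q ^ (n - h) * S h = S h - S (h + 1) := by
    intro h hh
    have : S (h + 1) = (1 - q ^ (n - h)) * S h := by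
      simp only [hS, Nat.add_sub_cancel]
      rw [show Finset.Icc 1 h = insert h (Finset.Icc 1 (h - 1)) from by
        ext x; simp [Finset.mem_Icc, Finset.mem_insert]; omega]
      rw [Finset.prod_insert (by simp [Finset.mem_Icc]; omega)]
    rw [this]; ring
  have habel : ∀ m : ℕ, (∑ h ∈ Finset.Icc 1 m, (h : ℝ) ^ k * (S h - S (h + 1)))
      = (∑ h ∈ Finset.Icc 1 m, ((h : ℝ) ^ k - ((h : ℝ) - 1) ^ k) * S h) - (m : ℝ) ^ k * S (m + 1) := by
    intro m
    induction m with
    | zero => simp [zero_pow (by omega : k ≠ 0)]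
    | succ m ih =>
        rw [Finset.sum_Icc_succ_top (by omega : 1 ≤ m + 1),
          Finset.sum_Icc_succ_top (by omega : 1 ≤ m + 1), ih]
        push_cast
        ring
  have hSn1 : S (n + 1) = 0 := by
    apply Finset.prod_eq_zero (i := n) (by simp [Finset.mem_Icc]; omega)
    simp
  -- match the two sides
  have hprod : ∀ h : ℕ, 1 ≤ h → h ≤ n → S h = ∏ j ∈ Finset.Icc (n + 1 - h) (n - 1), (1 - q ^ j) := by
    intro h h1 h2
    refine Finset.prod_nbij' (fun j => n - j) (fun j => n - j) ?_ ?_ ?_ ?_ ?_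
    · intro j hj; simp only [Finset.mem_Icc] at *; omega
    · intro j hj; simp only [Finset.mem_Icc] at *; omega
    · intro j hj; simp only [Finset.mem_Icc] at hj; omega
    · intro j hj; simp only [Finset.mem_Icc] at hj; omega
    · intro j hj; rfl
  have hmatch : (∑ h ∈ Finset.Icc 1 n, ((h : ℝ) ^ k - ((h : ℝ) - 1) ^ k) * S h)
      = ∑ i ∈ Finset.Icc 1 n, (((n : ℝ) - (i : ℝ) + 1) ^ k - ((n : ℝ) - (i : ℝ)) ^ k) *
          ∏ j ∈ Finset.Icc i (n - 1), (1 - q ^ j) := by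
    refine Finset.sum_nbij' (fun h => n + 1 - h) (fun i => n + 1 - i) ?_ ?_ ?_ ?_ ?_
    · intro h hh; simp only [Finset.mem_Icc] at *; omega
    · intro h hh; simp only [Finset.mem_Icc] at *; omega
    · intro h hh; simp only [Finset.mem_Icc] at hh; omega
    · intro h hh; simp only [Finset.mem_Icc] at hh; omega
    · intro h hh
      simp only [Finset.mem_Icc] at hh
      rw [hprod h hh.1 hh.2]
      have : ((n + 1 - h : ℕ) : ℝ) = (n : ℝ) + 1 - (h : ℝ) := by
        push_cast [Nat.cast_sub (by omega : h ≤ n + 1)]; ring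
      rw [this, show (n:ℝ) - ((n:ℝ) + 1 - (h:ℝ)) + 1 = (h:ℝ) from by ring,
        show (n:ℝ) - ((n:ℝ) + 1 - (h:ℝ)) = (h:ℝ) - 1 from by ring]
  -- assemble
  have hL : momentE q n k = ∑ h ∈ Finset.Icc 1 n, (h : ℝ) ^ k * (S h - S (h + 1)) := by
    unfold momentE
    refine Finset.sum_congr rfl fun h hh => ?_
    simp only [Finset.mem_Icc] at hh
    rw [mul_assoc, hstep h hh.1]
  rw [hL, habel n, hSn1, hRHS, ← hmatch]
  ring
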